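/- Let S be an ordered semigroup with real multiplication satisfying axioms O1–O5. If f, g, h ∈ S are such that f + h ≤ g + h and h ∝ g (i.e., h ≤ n g for some n ∈ ℕ), then f ≤ g. -/

import Mathlib

open scoped ENNReal

/-- `CC s t` : `s` is (sequentially) compactly contained in `t`, written `s ≪ t`. -/
def CC {S : Type*} [AddCommMonoid S] [PartialOrder S] (s t : S) : Prop :=
  ∀ u : ℕ → S, Monotone u → ∀ x : S, IsLUB (Set.range u) x → t ≤ x → ∃ n, s ≤ u n

/-- An ordered semigroup (positive, with translation invariant order) satisfying axioms O1-O5. -/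
structure CuO5 (S : Type*) [AddCommMonoid S] [PartialOrder S] : Prop where
  addRightMono : ∀ {s t : S}, s ≤ t → ∀ r : S, s + r ≤ t + r
  zeroLe : ∀ s : S, 0 ≤ s
  O1 : ∀ u : ℕ → S, Monotone u → ∃ x : S, IsLUB (Set.range u) x
  O2 : ∀ s : S, ∃ u : ℕ → S, (∀ n, CC (u n) (u (n + 1))) ∧ IsLUB (Set.range u) s
  O3 : ∀ {s₁ t₁ s₂ t₂ : S}, CC s₁ t₁ → CC s₂ t₂ → CC (s₁ + s₂) (t₁ + t₂)
  O4 : ∀ u v : ℕ → S, Monotone u → Monotone v → ∀ x y : S,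
    IsLUB (Set.range u) x → IsLUB (Set.range v) y →
    IsLUB (Set.range fun n => u n + v n) (x + y)
  O5 : ∀ {s' s t : S}, CC s' s → s ≤ t → ∃ r : S, s' + r ≤ t ∧ t ≤ s + r

/-- Axioms O1-O6. -/
structure CuO6 (S : Type*) [AddCommMonoid S] [PartialOrder S] extends CuO5 S : Prop where
  O6 : ∀ {s r t : S}, s ≤ r + t → ∀ {s' : S}, CC s' s →
    ∃ r' t' : S, s' ≤ r' + t' ∧ r' ≤ r ∧ r' ≤ s ∧ t' ≤ t ∧ t' ≤ s

/-- A functional on `S`: additive, order preserving, zero preserving map to `[0,∞]`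
preserving suprema of increasing sequences. -/
structure IsFunctional {S : Type*} [AddCommMonoid S] [PartialOrder S] (l : S → ℝ≥0∞) : Prop where
  map_zero : l 0 = 0
  map_add : ∀ s t : S, l (s + t) = l s + l t
  mono : ∀ {s t : S}, s ≤ t → l s ≤ l t
  map_sup : ∀ u : ℕ → S, Monotone u → ∀ x : S, IsLUB (Set.range u) x → l x = ⨆ n, l (u n)

/-- Real multiplication on `S` : a map `(0,∞] × S → S` additive, order preserving and
sup-(of increasing sequences)-preserving in each variable, with `1 · s = s`.
Scalars are elements of `ℝ≥0∞` required to be positive. -/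
structure RealMul (S : Type*) [AddCommMonoid S] [PartialOrder S] where
  smul : ℝ≥0∞ → S → S
  add_left : ∀ {a b : ℝ≥0∞}, 0 < a → 0 < b → ∀ s : S, smul (a + b) s = smul a s + smul b s
  add_right : ∀ {a : ℝ≥0∞}, 0 < a → ∀ s t : S, smul a (s + t) = smul a s + smul a t
  mono_left : ∀ {a b : ℝ≥0∞}, 0 < a → a ≤ b → ∀ s : S, smul a s ≤ smul b s
  mono_right : ∀ {a : ℝ≥0∞}, 0 < a → ∀ {s t : S}, s ≤ t → smul a s ≤ smul a t
  sup_left : ∀ u : ℕ → ℝ≥0∞, Monotone u → 0 < u 0 → ∀ s : S,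
    IsLUB (Set.range fun n => smul (u n) s) (smul (⨆ n, u n) s)
  sup_right : ∀ {a : ℝ≥0∞}, 0 < a → ∀ u : ℕ → S, Monotone u → ∀ x : S,
    IsLUB (Set.range u) x → IsLUB (Set.range fun n => smul a (u n)) (smul a x)
  one_smul : ∀ s : S, smul 1 s = s

/-- `D` is a dense subset of `S`: every element of `S` is the supremum of a rapidly
increasing sequence of elements of `D`. -/
def IsDenseSub {S : Type*} [AddCommMonoid S] [PartialOrder S] (D : Set S) : Prop :=
  ∀ s : S, ∃ u : ℕ → S, (∀ n, u n ∈ D) ∧ (∀ n, CC (u n) (u (n + 1))) ∧ IsLUB (Set.range u) s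

/-- `m` is the least upper bound of the functionals `l₁` and `l₂` in `F(S)`
(pointwise order). -/
def IsFSup {S : Type*} [AddCommMonoid S] [PartialOrder S] (l₁ l₂ m : S → ℝ≥0∞) : Prop :=
  IsFunctional m ∧ (∀ s, l₁ s ≤ m s) ∧ (∀ s, l₂ s ≤ m s) ∧
    ∀ d : S → ℝ≥0∞, IsFunctional d → (∀ s, l₁ s ≤ d s) → (∀ s, l₂ s ≤ d s) → ∀ s, m s ≤ d s

/-- `m` is the greatest lower bound of the functionals `l₁` and `l₂` in `F(S)`
(pointwise order). -/
def IsFInf {S : Type*} [AddCommMonoid S] [PartialOrder S] (l₁ l₂ m : S → ℝ≥0∞) : Prop :=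
  IsFunctional m ∧ (∀ s, m s ≤ l₁ s) ∧ (∀ s, m s ≤ l₂ s) ∧
    ∀ d : S → ℝ≥0∞, IsFunctional d → (∀ s, d s ≤ l₁ s) → (∀ s, d s ≤ l₂ s) → ∀ s, d s ≤ m s

/-- An isomorphism of ordered semigroups between `S` and the extended natural numbers. -/
def IsOrdSemigroupIso {S : Type*} [AddCommMonoid S] [PartialOrder S] (e : S ≃ ℕ∞) : Prop :=
  (∀ a b : S, e (a + b) = e a + e b) ∧ e 0 = 0 ∧ ∀ a b : S, a ≤ b ↔ e a ≤ e b

section Aux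

variable {S : Type*} [AddCommMonoid S] [PartialOrder S]

theorem CuO5.nsmul_mono (hS : CuO5 S) {s t : S} (h : s ≤ t) : ∀ k : ℕ, k • s ≤ k • t := by
  intro k
  induction k with
  | zero => simp
  | succ k ih =>
    rw [succ_nsmul, succ_nsmul]
    calc k • s + s ≤ k • t + s := hS.addRightMono ih s
    _ = s + k • t := add_comm _ _
    _ ≤ t + k • t := hS.addRightMono h _
    _ = k • t + t := add_comm _ _

theorem RealMul.smul_natCast_mul (rm : RealMul S) {c : ℝ≥0∞} (hc : 0 < c) (s : S) :
    ∀ m : ℕ, 0 < m → rm.smul ((m : ℝ≥0∞) * c) s = m • rm.smul c s := by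
  intro m
  induction m with
  | zero => intro hm; exact absurd hm (by simp)
  | succ m ih =>
    intro _
    rcases Nat.eq_zero_or_pos m with hm | hm
    · subst hm; simp [rm.one_smul]
    · have h1 : ((m + 1 : ℕ) : ℝ≥0∞) * c = (m : ℝ≥0∞) * c + c := by push_cast; ring
      have hpos : 0 < (m : ℝ≥0∞) * c :=
        ENNReal.mul_pos (Nat.cast_ne_zero.mpr hm.ne') hc.ne'
      rw [h1, rm.add_left hpos hc, ih hm, succ_nsmul]

theorem RealMul.smul_nsmul (rm : RealMul S) {c : ℝ≥0∞} (hc : 0 < c) (s : S) :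
    ∀ m : ℕ, 0 < m → rm.smul c (m • s) = m • rm.smul c s := by
  intro m
  induction m with
  | zero => intro hm; exact absurd hm (by simp)
  | succ m ih =>
    intro _
    rcases Nat.eq_zero_or_pos m with hm | hm
    · subst hm; simp
    · rw [succ_nsmul, rm.add_right hc, ih hm, succ_nsmul]

end Aux

/-- cancellation in an O1-O5 semigroup with real multiplication. -/
theorem cancel_of_prop {S : Type*} [AddCommMonoid S] [PartialOrder S]
    (hS : CuO5 S) (rm : RealMul S) (f g h : S)
    (hle : f + h ≤ g + h) (hprop : ∃ n : ℕ, h ≤ n • g) : f ≤ g := by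
  classical
  obtain ⟨n, hn⟩ := hprop
  -- Step 1: m • f + h ≤ m • g + h for all m
  have step1 : ∀ m : ℕ, m • f + h ≤ m • g + h := by
    intro m
    induction m with
    | zero => simp
    | succ m ih =>
      calc (m + 1) • f + h = (m • f + h) + f := by rw [succ_nsmul]; abel
      _ ≤ (m • g + h) + f := hS.addRightMono ih f
      _ = (f + h) + m • g := by abel
      _ ≤ (g + h) + m • g := hS.addRightMono hle _
      _ = (m + 1) • g + h := by rw [succ_nsmul]; abel
  -- Step 2: m • f ≤ (m + n) • g for all m
  have step2 : ∀ m : ℕ, m • f ≤ (m + n) • g := by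
    intro m
    calc m • f = 0 + m • f := (zero_add _).symm
    _ ≤ h + m • f := hS.addRightMono (hS.zeroLe h) _
    _ = m • f + h := add_comm _ _
    _ ≤ m • g + h := step1 m
    _ = h + m • g := add_comm _ _
    _ ≤ n • g + m • g := hS.addRightMono hn _
    _ = (m + n) • g := by rw [add_nsmul, add_comm]
  -- the approximating sequence of scalars
  set c : ℕ → ℝ≥0∞ := fun j => ((j : ℝ≥0∞) + 1) * ((j : ℝ≥0∞) + 2)⁻¹ with hc_def
  have hne0 : ∀ j : ℕ, ((j : ℝ≥0∞) + 2) ≠ 0 := by intro j; simp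
  have hnetop : ∀ j : ℕ, ((j : ℝ≥0∞) + 2) ≠ ⊤ := by
    intro j
    exact ENNReal.add_ne_top.mpr ⟨ENNReal.natCast_ne_top j, by simp⟩
  have hc_eq : ∀ j : ℕ, c j = 1 - ((j : ℝ≥0∞) + 2)⁻¹ := by
    intro j
    have hb : ((j : ℝ≥0∞) + 2)⁻¹ ≠ ⊤ := ENNReal.inv_ne_top.mpr (hne0 j)
    have hsum : (1 : ℝ≥0∞) = c j + ((j : ℝ≥0∞) + 2)⁻¹ := by
      have : c j + ((j : ℝ≥0∞) + 2)⁻¹ = ((j : ℝ≥0∞) + 2) * ((j : ℝ≥0∞) + 2)⁻¹ := by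
        rw [hc_def]; ring
      rw [this, ENNReal.mul_inv_cancel (hne0 j) (hnetop j)]
    exact (ENNReal.sub_eq_of_eq_add hb hsum).symm
  have hcpos : ∀ j : ℕ, 0 < c j := by
    intro j
    exact ENNReal.mul_pos (by simp) (ENNReal.inv_ne_zero.mpr (hnetop j))
  have hcmono : Monotone c := by
    intro i j hij
    rw [hc_eq i, hc_eq j]
    exact tsub_le_tsub_left (ENNReal.inv_le_inv' (by gcongr)) 1
  have hcsup : (⨆ j, c j) = 1 := by
    have hinf : (⨅ j : ℕ, ((j : ℝ≥0∞) + 2)⁻¹) = 0 := by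
      refine le_antisymm (ENNReal.le_of_forall_pos_le_add fun ε hε _ => ?_) zero_le
      obtain ⟨k, hk⟩ := ENNReal.exists_inv_nat_lt
        (show ((ε : ℝ≥0∞)) ≠ 0 by exact_mod_cast hε.ne')
      calc (⨅ j : ℕ, ((j : ℝ≥0∞) + 2)⁻¹) ≤ ((k : ℝ≥0∞) + 2)⁻¹ := iInf_le _ k
      _ ≤ ((k : ℝ≥0∞))⁻¹ := ENNReal.inv_le_inv' le_self_add
      _ ≤ 0 + ε := by rw [zero_add]; exact hk.le
    calc (⨆ j, c j) = ⨆ j : ℕ, (1 - ((j : ℝ≥0∞) + 2)⁻¹) := iSup_congr hc_eq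
    _ = 1 - ⨅ j : ℕ, ((j : ℝ≥0∞) + 2)⁻¹ := ENNReal.sub_iInf.symm
    _ = 1 := by rw [hinf, tsub_zero]
  -- key step: every f' compactly contained in f is ≤ g
  have key : ∀ f' : S, CC f' f → f' ≤ g := by
    intro f' hcc
    have hvmono : Monotone fun j => rm.smul (c j) f := fun i j hij =>
      rm.mono_left (hcpos i) (hcmono hij) f
    have hvlub : IsLUB (Set.range fun j => rm.smul (c j) f) f := by
      have := rm.sup_left c hcmono (hcpos 0) f
      rwa [hcsup, rm.one_smul] at this
    obtain ⟨j, hj⟩ := hcc _ hvmono f hvlub le_rfl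
    -- hj : f' ≤ rm.smul (c j) f
    set a : ℕ := j + 1 with ha_def
    set b : ℕ := j + 2 with hb_def
    set m : ℕ := a * n + 1 with hm_def
    set K : ℕ := m * b with hK_def
    set N : ℕ := a * (m + n) with hN_def
    have hm0 : m ≠ 0 := by simp [hm_def]
    have hK0 : K ≠ 0 := by rw [hK_def]; exact Nat.mul_ne_zero hm0 (by simp [hb_def])
    have hN0 : N ≠ 0 := by
      rw [hN_def]; exact Nat.mul_ne_zero (by simp [ha_def]) (fun hmn => hm0 (by omega))
    have hbpos : 0 < ((b : ℝ≥0∞))⁻¹ :=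
      ENNReal.inv_pos.mpr (ENNReal.natCast_ne_top b)
    have hcj : c j = (a : ℝ≥0∞) * ((b : ℝ≥0∞))⁻¹ := by
      rw [hc_def, ha_def, hb_def]; push_cast; ring
    have hbinv : b • rm.smul ((b : ℝ≥0∞))⁻¹ f = f := by
      rw [← rm.smul_natCast_mul hbpos f b (by omega),
        ENNReal.mul_inv_cancel (by exact_mod_cast (by omega : b ≠ 0)) (ENNReal.natCast_ne_top b),
        rm.one_smul]
    have h1 : b • f' ≤ a • f := by
      calc b • f' ≤ b • (a • rm.smul ((b : ℝ≥0∞))⁻¹ f) := by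
            refine hS.nsmul_mono ?_ b
            rw [← rm.smul_natCast_mul hbpos f a (by omega), ← hcj]
            exact hj
      _ = a • (b • rm.smul ((b : ℝ≥0∞))⁻¹ f) := smul_comm b a _
      _ = a • f := by rw [hbinv]
    have h2 : K • f' ≤ N • g := by
      calc K • f' = m • (b • f') := by rw [hK_def, mul_comm m b]; exact mul_nsmul f' b m
      _ ≤ m • (a • f) := hS.nsmul_mono h1 m
      _ = a • (m • f) := smul_comm m a f
      _ ≤ a • ((m + n) • g) := hS.nsmul_mono (step2 m) a
      _ = N • g := by rw [hN_def, mul_comm a (m + n)]; exact (mul_nsmul g (m + n) a).symm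
    have hKne : (K : ℝ≥0∞) ≠ 0 := by exact_mod_cast hK0
    have hKinvpos : 0 < ((K : ℝ≥0∞))⁻¹ := ENNReal.inv_pos.mpr (ENNReal.natCast_ne_top K)
    have hNK : N ≤ K := by
      rw [hN_def, hK_def, hm_def]; nlinarith [Nat.zero_le a, Nat.zero_le n]
    have hf' : f' = rm.smul ((K : ℝ≥0∞))⁻¹ (K • f') := by
      rw [rm.smul_nsmul hKinvpos f' K (Nat.pos_of_ne_zero hK0),
        ← rm.smul_natCast_mul hKinvpos f' K (Nat.pos_of_ne_zero hK0),
        ENNReal.mul_inv_cancel hKne (ENNReal.natCast_ne_top K), rm.one_smul]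
    calc f' = rm.smul ((K : ℝ≥0∞))⁻¹ (K • f') := hf'
    _ ≤ rm.smul ((K : ℝ≥0∞))⁻¹ (N • g) := rm.mono_right hKinvpos h2
    _ = rm.smul ((N : ℝ≥0∞) * ((K : ℝ≥0∞))⁻¹) g := by
        rw [rm.smul_nsmul hKinvpos g N (Nat.pos_of_ne_zero hN0),
          rm.smul_natCast_mul hKinvpos g N (Nat.pos_of_ne_zero hN0)]
    _ ≤ rm.smul 1 g := by
        refine rm.mono_left (ENNReal.mul_pos (by exact_mod_cast hN0) hKinvpos.ne') ?_ g
        calc (N : ℝ≥0∞) * ((K : ℝ≥0∞))⁻¹ ≤ (K : ℝ≥0∞) * ((K : ℝ≥0∞))⁻¹ := by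
              gcongr
        _ = 1 := ENNReal.mul_inv_cancel hKne (ENNReal.natCast_ne_top K)
    _ = g := rm.one_smul g
  -- conclude via O2
  obtain ⟨u, hu, hlubf⟩ := hS.O2 f
  have hukf : ∀ k, CC (u k) f := by
    intro k v hv x hx hfx
    exact hu k v hv x hx ((hlubf.1 ⟨k + 1, rfl⟩).trans hfx)
  refine hlubf.2 ?_
  rintro _ ⟨k, rfl⟩
  exact key _ (hukf k)
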